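/- arXiv:1003.2440 — 5 statements merged into one kernel-verified Lean document; each statement's English description precedes it below -/
import Mathlib

section
/- For every m×n real matrix B, sup_{y ∈ Δ_m} inf_{z ∈ Δ_n} Σ_{i,j} y_i B_{ij} z_j = inf_{z ∈ Δ_n} sup_{y ∈ Δ_m} Σ_{i,j} y_i B_{ij} z_j; i.e., the zero-sum matrix game with payoff matrix B has a value in mixed strategies. -/
open scoped BigOperators

/-- Expected payoff to player 1 in the matrix game `B` when player 1 uses the
mixed strategy `y` and player 2 uses the mixed strategy `z`. -/
noncomputable def expectedPayoff {m n : ℕ} (B : Matrix (Fin m) (Fin n) ℝ)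
    (y : Fin m → ℝ) (z : Fin n → ℝ) : ℝ :=
  ∑ i, ∑ j, y i * B i j * z j

section Aux

open Finset

lemma mem_stdSimplex_le_one {k : ℕ} {y : Fin k → ℝ} (hy : y ∈ stdSimplex ℝ (Fin k)) (i : Fin k) :
    y i ≤ 1 := by
  calc y i ≤ ∑ j, y j := Finset.single_le_sum (fun j _ => hy.1 j) (mem_univ i)
    _ = 1 := hy.2

lemma abs_expectedPayoff_le {m n : ℕ} (B : Matrix (Fin m) (Fin n) ℝ) {y : Fin m → ℝ}
    {z : Fin n → ℝ} (hy : y ∈ stdSimplex ℝ (Fin m)) (hz : z ∈ stdSimplex ℝ (Fin n)) :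
    |expectedPayoff B y z| ≤ ∑ i, ∑ j, |B i j| := by
  unfold expectedPayoff
  calc |∑ i, ∑ j, y i * B i j * z j| ≤ ∑ i, |∑ j, y i * B i j * z j| :=
        Finset.abs_sum_le_sum_abs _ _
    _ ≤ ∑ i, ∑ j, |y i * B i j * z j| :=
        Finset.sum_le_sum fun i _ => Finset.abs_sum_le_sum_abs _ _
    _ ≤ ∑ i, ∑ j, |B i j| := by
        refine Finset.sum_le_sum fun i _ => Finset.sum_le_sum fun j _ => ?_
        rw [abs_mul, abs_mul, abs_of_nonneg (hy.1 i), abs_of_nonneg (hz.1 j)]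
        have h1 : y i ≤ 1 := mem_stdSimplex_le_one hy i
        have h2 : z j ≤ 1 := mem_stdSimplex_le_one hz j
        have h3 : y i * z j ≤ 1 := mul_le_one₀ h1 (hz.1 j) h2
        nlinarith [abs_nonneg (B i j), mul_nonneg (hy.1 i) (hz.1 j)]

lemma expectedPayoff_eq_sum_mulVec {m n : ℕ} (B : Matrix (Fin m) (Fin n) ℝ) (y : Fin m → ℝ)
    (z : Fin n → ℝ) : expectedPayoff B y z = ∑ i, y i * B.mulVec z i := by
  simp [expectedPayoff, Matrix.mulVec, dotProduct, Finset.mul_sum, mul_assoc]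

end Aux

/-- **Minimax theorem for matrix games.** Every finite zero-sum matrix game
has a value in mixed strategies: the sup-inf of the expected payoff over the
standard simplices equals the inf-sup. -/
theorem matrix_game_minimax (m n : ℕ) (hm : 0 < m) (hn : 0 < n)
    (B : Matrix (Fin m) (Fin n) ℝ) :
    (⨆ y : stdSimplex ℝ (Fin m), ⨅ z : stdSimplex ℝ (Fin n),
        expectedPayoff B y z) =
    (⨅ z : stdSimplex ℝ (Fin n), ⨆ y : stdSimplex ℝ (Fin m),
        expectedPayoff B y z) := by
  classical
  set M : ℝ := ∑ i, ∑ j, |B i j| with hMdef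
  have y0mem : (Pi.single ⟨0, hm⟩ 1 : Fin m → ℝ) ∈ stdSimplex ℝ (Fin m) :=
    single_mem_stdSimplex ℝ _
  have z0mem : (Pi.single ⟨0, hn⟩ 1 : Fin n → ℝ) ∈ stdSimplex ℝ (Fin n) :=
    single_mem_stdSimplex ℝ _
  haveI hmne : Nonempty (stdSimplex ℝ (Fin m)) := ⟨⟨_, y0mem⟩⟩
  haveI hnne : Nonempty (stdSimplex ℝ (Fin n)) := ⟨⟨_, z0mem⟩⟩
  have hbd : ∀ (y : stdSimplex ℝ (Fin m)) (z : stdSimplex ℝ (Fin n)),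
      |expectedPayoff B y z| ≤ M := fun y z => abs_expectedPayoff_le B y.2 z.2
  -- boundedness facts
  have bddA : ∀ z : stdSimplex ℝ (Fin n),
      BddAbove (Set.range fun y : stdSimplex ℝ (Fin m) => expectedPayoff B y z) := by
    intro z
    refine ⟨M, ?_⟩
    rintro x ⟨y, rfl⟩
    linarith [(abs_le.1 (hbd y z)).2]
  have bddB : ∀ y : stdSimplex ℝ (Fin m),
      BddBelow (Set.range fun z : stdSimplex ℝ (Fin n) => expectedPayoff B y z) := by
    intro y
    refine ⟨-M, ?_⟩
    rintro x ⟨z, rfl⟩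
    linarith [(abs_le.1 (hbd y z)).1]
  have bddOuterSup : BddAbove (Set.range fun y : stdSimplex ℝ (Fin m) =>
      ⨅ z : stdSimplex ℝ (Fin n), expectedPayoff B y z) := by
    refine ⟨M, ?_⟩
    rintro x ⟨y, rfl⟩
    obtain ⟨z0⟩ := hnne
    exact (ciInf_le (bddB y) z0).trans (by linarith [(abs_le.1 (hbd y z0)).2])
  have bddOuterInf : BddBelow (Set.range fun z : stdSimplex ℝ (Fin n) =>
      ⨆ y : stdSimplex ℝ (Fin m), expectedPayoff B y z) := by
    refine ⟨-M, ?_⟩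
    rintro x ⟨z, rfl⟩
    obtain ⟨y0⟩ := hmne
    exact le_trans (by linarith [(abs_le.1 (hbd y0 z)).1]) (le_ciSup (bddA z) y0)
  -- easy direction
  have stepA : (⨆ y : stdSimplex ℝ (Fin m), ⨅ z : stdSimplex ℝ (Fin n),
      expectedPayoff B y z) ≤ ⨅ z : stdSimplex ℝ (Fin n), ⨆ y : stdSimplex ℝ (Fin m),
      expectedPayoff B y z := by
    refine ciSup_le fun y => le_ciInf fun z => ?_
    exact (ciInf_le (bddB y) z).trans (le_ciSup (bddA z) y)
  refine le_antisymm stepA ?_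
  -- hard direction
  by_contra hlt
  push_neg at hlt
  obtain ⟨c, hc1, hc2⟩ := exists_between hlt
  -- hc1 : supinf < c ; hc2 : c < infsup
  set K : Set (Fin m → ℝ) := (fun z => B.mulVec z) '' stdSimplex ℝ (Fin n) with hKdef
  set D : Set (Fin m → ℝ) := {x | ∀ i, x i ≤ c} with hDdef
  have hlin : IsLinearMap ℝ (fun z : Fin n → ℝ => B.mulVec z) :=
    ⟨fun a b => B.mulVec_add a b, fun r a => B.mulVec_smul r a⟩
  have hKconv : Convex ℝ K := (convex_stdSimplex ℝ (Fin n)).is_linear_image hlin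
  have hcont : Continuous fun z : Fin n → ℝ => B.mulVec z := by
    refine continuous_pi fun i => ?_
    have : (fun z : Fin n → ℝ => B.mulVec z i) = fun z => ∑ j, B i j * z j := rfl
    rw [this]
    exact continuous_finset_sum Finset.univ fun j _ => continuous_const.mul (continuous_apply j)
  have hKcomp : IsCompact K := (isCompact_stdSimplex ℝ (Fin n)).image hcont
  have hDconv : Convex ℝ D := by
    intro x hx y hy a b ha hb hab i
    simp only [Pi.add_apply, Pi.smul_apply, smul_eq_mul]
    have h1 : a * x i ≤ a * c := mul_le_mul_of_nonneg_left (hx i) ha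
    have h2 : b * y i ≤ b * c := mul_le_mul_of_nonneg_left (hy i) hb
    have h3 : a * c + b * c = c := by rw [← add_mul, hab, one_mul]
    linarith
  have hDclosed : IsClosed D := by
    have : D = ⋂ i, {x : Fin m → ℝ | x i ≤ c} := by
      ext x; simp [hDdef]
    rw [this]
    exact isClosed_iInter fun i => isClosed_le (continuous_apply i) continuous_const
  have hdisj : Disjoint K D := by
    rw [Set.disjoint_left]
    rintro x ⟨z, hz, rfl⟩ hxD
    have hsup : (⨆ y : stdSimplex ℝ (Fin m), expectedPayoff B y z) ≤ c := by
      refine ciSup_le fun y => ?_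
      rw [expectedPayoff_eq_sum_mulVec]
      calc ∑ i, (y : Fin m → ℝ) i * B.mulVec z i ≤ ∑ i, (y : Fin m → ℝ) i * c :=
            Finset.sum_le_sum fun i _ => mul_le_mul_of_nonneg_left (hxD i) (y.2.1 i)
        _ = c := by rw [← Finset.sum_mul, show (∑ i, (y : Fin m → ℝ) i) = 1 from y.2.2, one_mul]
    have h2 : (⨅ z : stdSimplex ℝ (Fin n), ⨆ y : stdSimplex ℝ (Fin m),
        expectedPayoff B y z) ≤ ⨆ y : stdSimplex ℝ (Fin m), expectedPayoff B y z :=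
      ciInf_le bddOuterInf (⟨z, hz⟩ : stdSimplex ℝ (Fin n))
    linarith [h2.trans hsup]
  obtain ⟨f, u, v, hfK, huv, hfD⟩ :=
    geometric_hahn_banach_compact_closed hKconv hKcomp hDconv hDclosed hdisj
  set g : Fin m → ℝ := fun i => f (fun j => if i = j then (1 : ℝ) else 0) with hgdef
  have hf : ∀ x : Fin m → ℝ, f x = ∑ i, x i * g i := by
    intro x
    conv_lhs => rw [pi_eq_sum_univ x]
    rw [map_sum]
    simp only [map_smul, smul_eq_mul, hgdef]
  have hfc : f (fun _ => c) = c * ∑ i, g i := by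
    rw [hf]; rw [Finset.mul_sum]
  have hc1D : (fun _ => c : Fin m → ℝ) ∈ D := fun i => le_refl c
  have hgle : ∀ i, g i ≤ 0 := by
    intro i
    by_contra hpos
    push_neg at hpos
    have hF : v < f (fun _ => c) := hfD _ hc1D
    set t : ℝ := (f (fun _ => c) - v) / g i with htdef
    have htpos : 0 < t := div_pos (by linarith) hpos
    have hmemD : (fun j => c - t * (if i = j then (1:ℝ) else 0)) ∈ D := by
      intro j
      show c - t * (if i = j then (1:ℝ) else 0) ≤ c
      split <;> nlinarith
    have hv := hfD _ hmemD
    have heq : (fun j => c - t * (if i = j then (1:ℝ) else 0)) =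
        (fun _ => c) - t • (fun j => if i = j then (1:ℝ) else 0) := by
      funext j; simp [mul_comm]
    rw [heq, map_sub, map_smul, smul_eq_mul] at hv
    have hgi : f (fun j => if i = j then (1:ℝ) else 0) = g i := rfl
    rw [hgi] at hv
    have : t * g i = f (fun _ => c) - v := by
      rw [htdef]; field_simp
    linarith
  set S : ℝ := ∑ i, -g i with hSdef
  have hST : S = -∑ i, g i := by rw [hSdef, Finset.sum_neg_distrib]
  have hSpos : 0 < S := by
    rcases lt_or_ge 0 S with h | h
    · exact h
    · exfalso
      have hS0 : S = 0 :=
        le_antisymm h (Finset.sum_nonneg fun i _ => by linarith [hgle i])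
      have hg0 : ∀ i, g i = 0 := by
        intro i
        have := (Finset.sum_eq_zero_iff_of_nonneg
          (fun i _ => by linarith [hgle i] : ∀ i ∈ Finset.univ, 0 ≤ -g i)).1 hS0 i
          (Finset.mem_univ i)
        linarith [this]
      have hf0 : ∀ x : Fin m → ℝ, f x = 0 := by
        intro x; rw [hf]; simp [hg0]
      have h1 : (0:ℝ) < u := by
        have := hfK (B.mulVec (Pi.single ⟨0, hn⟩ 1)) ⟨_, z0mem, rfl⟩
        rw [hf0] at this; exact this
      have h2 : v < 0 := by
        have := hfD _ hc1D
        rw [hf0] at this; exact this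
      linarith
  -- the optimal strategy
  set ystar : Fin m → ℝ := fun i => -g i / S with hystardef
  have hymem : ystar ∈ stdSimplex ℝ (Fin m) := by
    constructor
    · intro i
      exact div_nonneg (by linarith [hgle i]) hSpos.le
    · rw [hystardef]
      simp only
      rw [← Finset.sum_div, ← hSdef, div_self hSpos.ne']
  have key : ∀ z : Fin n → ℝ, z ∈ stdSimplex ℝ (Fin n) → c < expectedPayoff B ystar z := by
    intro z hz
    have h1 : f (B.mulVec z) < u := hfK _ ⟨z, hz, rfl⟩
    have h2 : v < f (fun _ => c) := hfD _ hc1D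
    have hP : expectedPayoff B ystar z = (∑ i, -(B.mulVec z i * g i)) / S := by
      rw [expectedPayoff_eq_sum_mulVec, Finset.sum_div]
      exact Finset.sum_congr rfl fun i _ => by simp only [hystardef]; ring
    have hfz : f (B.mulVec z) = ∑ i, B.mulVec z i * g i := hf _
    rw [hP, Finset.sum_neg_distrib, ← hfz, lt_div_iff₀ hSpos]
    have hcS : c * S = -f (fun _ => c) := by
      rw [hfc, hST]; ring
    linarith
  have hkey1 : c ≤ ⨅ z : stdSimplex ℝ (Fin n), expectedPayoff B ystar z :=
    le_ciInf fun z => (key z z.2).le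
  have hkey2 : (⨅ z : stdSimplex ℝ (Fin n), expectedPayoff B ystar z) ≤
      ⨆ y : stdSimplex ℝ (Fin m), ⨅ z : stdSimplex ℝ (Fin n), expectedPayoff B y z :=
    le_ciSup bddOuterSup (⟨ystar, hymem⟩ : stdSimplex ℝ (Fin m))
  linarith
end

section
/- For every m×n real matrix B there exists a saddle point in mixed strategies: there exist y* ∈ Δ_m and z* ∈ Δ_n such that for all y ∈ Δ_m and all z ∈ Δ_n, Σ_{i,j} y_i B_{ij} z*_j ≤ Σ_{i,j} y*_i B_{ij} z*_j ≤ Σ_{i,j} y*_i B_{ij} z_j. -/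
open scoped BigOperators

open Finset in
/-- Theorem of the alternative for matrix games. -/
lemma matrixGame_alternative (m n : ℕ) (hm : 0 < m) (A : Matrix (Fin m) (Fin n) ℝ) :
    (∃ z ∈ stdSimplex ℝ (Fin n), ∀ i, ∑ j, A i j * z j ≤ 0) ∨
    (∃ y ∈ stdSimplex ℝ (Fin m), ∀ j, 0 < ∑ i, y i * A i j) := by
  classical
  set T : (Fin n ⊕ Fin m → ℝ) →ₗ[ℝ] (Fin m → ℝ) :=
    { toFun := fun w i => (∑ j, w (Sum.inl j) * A i j) + w (Sum.inr i)
      map_add' := by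
        intro u v; funext i
        simp only [Pi.add_apply, add_mul, Finset.sum_add_distrib]
        ring
      map_smul' := by
        intro c v; funext i
        simp only [Pi.smul_apply, smul_eq_mul, RingHom.id_apply, Finset.mul_sum, mul_add]
        rw [Finset.sum_congr rfl fun j _ => (mul_assoc c (v (Sum.inl j)) (A i j))] } with hT
  set C : Set (Fin m → ℝ) := T '' stdSimplex ℝ (Fin n ⊕ Fin m) with hC
  have hconv : Convex ℝ C := (convex_stdSimplex ℝ _).linear_image T
  have hcomp : IsCompact C :=
    (isCompact_stdSimplex ℝ _).image T.continuous_of_finiteDimensional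
  by_cases h0 : (0 : Fin m → ℝ) ∈ C
  · -- extract weights
    obtain ⟨w, hw, hTw⟩ := h0
    have hw1 : ∀ x, 0 ≤ w x := fun x => hw.1 x
    have hw2 : (∑ j, w (Sum.inl j)) + ∑ i, w (Sum.inr i) = 1 := by
      have := hw.2
      rwa [Fintype.sum_sum_type] at this
    have heq : ∀ i, (∑ j, w (Sum.inl j) * A i j) + w (Sum.inr i) = 0 := by
      intro i
      exact congrFun hTw i
    set t : ℝ := ∑ j, w (Sum.inl j) with ht
    have ht0 : 0 ≤ t := Finset.sum_nonneg fun j _ => hw1 _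
    rcases eq_or_lt_of_le ht0 with h | h
    · -- t = 0 : contradiction
      exfalso
      have hz : ∀ j, w (Sum.inl j) = 0 := by
        have := (Finset.sum_eq_zero_iff_of_nonneg (fun j _ => hw1 (Sum.inl j))).mp h.symm
        exact fun j => this j (mem_univ _)
      have hzi : ∀ i, w (Sum.inr i) = 0 := by
        intro i
        have := heq i
        simpa [hz] using this
      have h2 : ∑ i, w (Sum.inr i) = 0 := Finset.sum_eq_zero fun i _ => hzi i
      rw [← h, h2] at hw2
      norm_num at hw2
    · left
      refine ⟨fun j => w (Sum.inl j) / t, ⟨fun j => div_nonneg (hw1 _) ht0, ?_⟩, ?_⟩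
      · rw [← Finset.sum_div, ← ht, div_self h.ne']
      · intro i
        have hsum : ∑ j, A i j * (w (Sum.inl j) / t) = (∑ j, w (Sum.inl j) * A i j) / t := by
          rw [Finset.sum_div]
          congr 1; funext j; ring
        rw [hsum]
        have : (∑ j, w (Sum.inl j) * A i j) = -(w (Sum.inr i)) := by linarith [heq i]
        rw [this]
        exact div_nonpos_of_nonpos_of_nonneg (neg_nonpos_of_nonneg (hw1 _)) ht0
  · -- separation
    obtain ⟨f, u, hfu, hub⟩ :=
      geometric_hahn_banach_point_closed hconv hcomp.isClosed h0
    have hu : 0 < u := by simpa using hfu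
    set p : Fin m → ℝ := fun i => f (Pi.single i 1) with hp
    have hmemE : ∀ i : Fin m, (Pi.single i 1 : Fin m → ℝ) ∈ C := by
      intro i
      refine ⟨Pi.single (Sum.inr i) 1, single_mem_stdSimplex ℝ _, ?_⟩
      funext i'
      simp [hT, Pi.single_apply, Sum.inr.injEq, eq_comm]
    have hppos : ∀ i, 0 < p i := fun i => hu.trans (hub _ (hmemE i))
    have hmemC : ∀ j : Fin n, (fun i => A i j) ∈ C := by
      intro j
      refine ⟨Pi.single (Sum.inl j) 1, single_mem_stdSimplex ℝ _, ?_⟩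
      funext i
      simp [hT, Pi.single_apply]
    have hcol : ∀ j, f (fun i => A i j) = ∑ i, A i j * p i := by
      intro j
      have hrepr : (fun i => A i j) = ∑ i, A i j • (Pi.single i 1 : Fin m → ℝ) := by
        funext i'
        simp [Finset.sum_apply, Pi.single_apply, mul_ite]
      rw [hrepr, map_sum]
      simp [hp, smul_eq_mul]
    set P : ℝ := ∑ i, p i with hP
    have hPpos : 0 < P := by
      have : Nonempty (Fin m) := Fin.pos_iff_nonempty.mp hm
      exact Finset.sum_pos (fun i _ => hppos i) univ_nonempty
    right
    refine ⟨fun i => p i / P, ⟨fun i => div_nonneg (hppos i).le hPpos.le, ?_⟩, ?_⟩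
    · rw [← Finset.sum_div, ← hP, div_self hPpos.ne']
    · intro j
      have hsum : ∑ i, (p i / P) * A i j = (∑ i, A i j * p i) / P := by
        rw [Finset.sum_div]
        congr 1; funext i; ring
      rw [hsum]
      exact div_pos (by simpa [hcol j] using hu.trans (hub _ (hmemC j))) hPpos

open Finset in
/-- **Existence of a saddle point in mixed strategies.** For every `m × n`
real matrix `B` there exist mixed strategies `y* ∈ Δ_m` and `z* ∈ Δ_n` such
that for all `y ∈ Δ_m` and `z ∈ Δ_n`,
`payoff y z* ≤ payoff y* z* ≤ payoff y* z`. -/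
theorem matrix_game_exists_saddle_point (m n : ℕ) (hm : 0 < m) (hn : 0 < n)
    (B : Matrix (Fin m) (Fin n) ℝ) :
    ∃ ystar ∈ stdSimplex ℝ (Fin m), ∃ zstar ∈ stdSimplex ℝ (Fin n),
      ∀ y ∈ stdSimplex ℝ (Fin m), ∀ z ∈ stdSimplex ℝ (Fin n),
        expectedPayoff B y zstar ≤ expectedPayoff B ystar zstar ∧
        expectedPayoff B ystar zstar ≤ expectedPayoff B ystar z := by
  classical
  have hmne : (univ : Finset (Fin m)).Nonempty :=
    univ_nonempty_iff.mpr (Fin.pos_iff_nonempty.mp hm)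
  have hnne : (univ : Finset (Fin n)).Nonempty :=
    univ_nonempty_iff.mpr (Fin.pos_iff_nonempty.mp hn)
  set g : (Fin m → ℝ) → ℝ := fun y => univ.inf' hnne (fun j => ∑ i, y i * B i j) with hg
  set h : (Fin n → ℝ) → ℝ := fun z => univ.sup' hmne (fun i => ∑ j, B i j * z j) with hh
  have hgc : Continuous g :=
    Continuous.finset_inf'_apply hnne fun j _ =>
      continuous_finset_sum _ fun i _ => (continuous_apply i).mul continuous_const
  have hhc : Continuous h :=
    Continuous.finset_sup'_apply hmne fun i _ =>
      continuous_finset_sum _ fun j _ => continuous_const.mul (continuous_apply j)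
  have hSm : (stdSimplex ℝ (Fin m)).Nonempty := ⟨_, single_mem_stdSimplex ℝ (⟨0, hm⟩ : Fin m)⟩
  have hSn : (stdSimplex ℝ (Fin n)).Nonempty := ⟨_, single_mem_stdSimplex ℝ (⟨0, hn⟩ : Fin n)⟩
  obtain ⟨ystar, hyS, hymax⟩ :=
    (isCompact_stdSimplex ℝ (Fin m)).exists_isMaxOn hSm hgc.continuousOn
  obtain ⟨zstar, hzS, hzmin⟩ :=
    (isCompact_stdSimplex ℝ (Fin n)).exists_isMinOn hSn hhc.continuousOn
  -- payoff rearrangements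
  have hpay1 : ∀ (y : Fin m → ℝ) (z : Fin n → ℝ),
      expectedPayoff B y z = ∑ j, (∑ i, y i * B i j) * z j := by
    intro y z
    rw [expectedPayoff, Finset.sum_comm]
    congr 1; funext j
    rw [Finset.sum_mul]
  have hpay2 : ∀ (y : Fin m → ℝ) (z : Fin n → ℝ),
      expectedPayoff B y z = ∑ i, y i * (∑ j, B i j * z j) := by
    intro y z
    rw [expectedPayoff]
    congr 1; funext i
    rw [Finset.mul_sum]
    congr 1; funext j; ring
  -- g y ≤ payoff y z for z in the simplex
  have hA : ∀ y, ∀ z ∈ stdSimplex ℝ (Fin n), g y ≤ expectedPayoff B y z := by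
    intro y z hz
    rw [hpay1]
    calc g y = ∑ j, g y * z j := by rw [← Finset.mul_sum, hz.2, mul_one]
    _ ≤ ∑ j, (∑ i, y i * B i j) * z j :=
        Finset.sum_le_sum fun j _ =>
          mul_le_mul_of_nonneg_right (inf'_le _ (mem_univ j)) (hz.1 j)
  -- payoff y z ≤ h z for y in the simplex
  have hB : ∀ y ∈ stdSimplex ℝ (Fin m), ∀ z, expectedPayoff B y z ≤ h z := by
    intro y hy z
    rw [hpay2]
    calc ∑ i, y i * (∑ j, B i j * z j) ≤ ∑ i, y i * h z :=
        Finset.sum_le_sum fun i _ =>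
          mul_le_mul_of_nonneg_left (le_sup' (fun i => ∑ j, B i j * z j) (mem_univ i)) (hy.1 i)
    _ = h z := by rw [← Finset.sum_mul, hy.2, one_mul]
  -- the hard inequality
  have hkey : h zstar ≤ g ystar := by
    by_contra hcon
    push_neg at hcon
    set c : ℝ := (g ystar + h zstar) / 2 with hc
    have hc1 : g ystar < c := by rw [hc]; linarith
    have hc2 : c < h zstar := by rw [hc]; linarith
    rcases matrixGame_alternative m n hm (fun i j => B i j - c) with
      ⟨z, hz, ha⟩ | ⟨y, hy, hb⟩
    · have hle : h z ≤ c := by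
        refine Finset.sup'_le _ _ fun i _ => ?_
        have := ha i
        have hexp : ∑ j, (B i j - c) * z j = (∑ j, B i j * z j) - c := by
          simp only [sub_mul, Finset.sum_sub_distrib, ← Finset.mul_sum, hz.2, mul_one]
        linarith [hexp ▸ this]
      have hmin : h zstar ≤ h z := hzmin hz
      linarith
    · have hge : c ≤ g y := by
        refine Finset.le_inf' _ _ fun j _ => ?_
        have := hb j
        have hexp : ∑ i, y i * (B i j - c) = (∑ i, y i * B i j) - c := by
          simp only [mul_sub, Finset.sum_sub_distrib, ← Finset.sum_mul, hy.2, one_mul]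
        linarith [hexp ▸ this]
      have hmax : g y ≤ g ystar := hymax hy
      linarith
  refine ⟨ystar, hyS, zstar, hzS, fun y hy z hz => ⟨?_, ?_⟩⟩
  · exact le_trans (hB y hy zstar) (le_trans hkey (hA ystar zstar hzS))
  · exact le_trans (hB ystar hyS zstar) (le_trans hkey (hA ystar z hz))
end

section
/- For every m×n real matrix B there exists y* ∈ Δ_m such that Σ_i y*_i B_{ij} ≥ val(B) for every column j ∈ {1,…,n}, and there exists z* ∈ Δ_n such that Σ_j B_{ij} z*_j ≤ val(B) for every row i ∈ {1,…,m}; i.e., each player possesses an optimal mixed strategy guaranteeing the value of the game against every pure strategy of the opponent. -/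
open scoped BigOperators Pointwise

/-- The value (in mixed strategies) of the zero-sum matrix game `B`:
`val(B) = sup_{y ∈ Δ_m} inf_{z ∈ Δ_n} ∑_{i,j} y_i B_{ij} z_j`. -/
noncomputable def matrixGameValue {m n : ℕ} (B : Matrix (Fin m) (Fin n) ℝ) : ℝ :=
  ⨆ y : stdSimplex ℝ (Fin m), ⨅ z : stdSimplex ℝ (Fin n), expectedPayoff B y z

section Aux

variable {m n : ℕ}

/-- The payoff written as a single weighted sum over columns. -/
lemma expectedPayoff_eq (B : Matrix (Fin m) (Fin n) ℝ) (y : Fin m → ℝ) (z : Fin n → ℝ) :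
    expectedPayoff B y z = ∑ j, (∑ i, y i * B i j) * z j := by
  unfold expectedPayoff
  rw [Finset.sum_comm]
  simp_rw [Finset.sum_mul]

lemma sum_indicator_right (c : Fin n → ℝ) (j0 : Fin n) :
    ∑ j, c j * (if j0 = j then (1:ℝ) else 0) = c j0 := by
  simp [mul_ite]

lemma min_le_weighted_sum (c : Fin n → ℝ) (hne : (Finset.univ : Finset (Fin n)).Nonempty)
    {z : Fin n → ℝ} (hz : z ∈ stdSimplex ℝ (Fin n)) :
    Finset.univ.inf' hne c ≤ ∑ j, c j * z j := by
  have h1 : ∑ j, Finset.univ.inf' hne c * z j ≤ ∑ j, c j * z j := by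
    refine Finset.sum_le_sum fun j _ => ?_
    exact mul_le_mul_of_nonneg_right (Finset.inf'_le _ (Finset.mem_univ j)) (hz.1 j)
  calc Finset.univ.inf' hne c = Finset.univ.inf' hne c * ∑ j, z j := by rw [hz.2, mul_one]
    _ = ∑ j, Finset.univ.inf' hne c * z j := by rw [Finset.mul_sum]
    _ ≤ _ := h1

/-- Key separation lemma (theorem of alternatives): if player 2 cannot force a
nonpositive payoff, then player 1 has a strategy that is strictly positive
against every column. -/
lemma farkas_alternative (hm : 0 < m) (hn : 0 < n) (B : Matrix (Fin m) (Fin n) ℝ)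
    (h : ¬ ∃ z ∈ stdSimplex ℝ (Fin n), ∀ i, ∑ j, B i j * z j ≤ 0) :
    ∃ y ∈ stdSimplex ℝ (Fin m), ∀ j, 0 < ∑ i, y i * B i j := by
  classical
  set L : (Fin n → ℝ) →ₗ[ℝ] (Fin m → ℝ) := Matrix.mulVecLin B with hL
  have hLapp : ∀ z i, L z i = ∑ j, B i j * z j := by
    intro z i
    simp [hL, Matrix.mulVecLin_apply, Matrix.mulVec, dotProduct]
  set D : Set (Fin m → ℝ) := L '' stdSimplex ℝ (Fin n) with hD
  set C : Set (Fin m → ℝ) := {v | ∀ i, 0 ≤ v i} with hC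
  have hDco : IsCompact D := by
    refine (isCompact_stdSimplex ℝ _).image ?_
    refine continuous_pi fun i => ?_
    have : (fun z : Fin n → ℝ => L z i) = fun z => ∑ j, B i j * z j := by
      ext z; exact hLapp z i
    rw [this]
    exact continuous_finset_sum _ fun j _ => continuous_const.mul (continuous_apply j)
  have hDcv : Convex ℝ D := (convex_stdSimplex ℝ _).linear_image L
  have hCcl : IsClosed C := by
    have : C = ⋂ i, {v : Fin m → ℝ | 0 ≤ v i} := by ext v; simp [hC]
    rw [this]
    exact isClosed_iInter fun i => isClosed_le continuous_const (continuous_apply i)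
  have hCcv : Convex ℝ C := by
    intro x hx y hy a b ha hb hab i
    have := add_nonneg (mul_nonneg ha (hx i)) (mul_nonneg hb (hy i))
    simpa using this
  have hScl : IsClosed (D + C) := hCcl.add_left_of_isCompact hDco
  have hScv : Convex ℝ (D + C) := hDcv.add hCcv
  have h0 : (0 : Fin m → ℝ) ∉ D + C := by
    rintro ⟨d, hd, v, hv, hdv⟩
    obtain ⟨z, hz, rfl⟩ := hd
    refine h ⟨z, hz, fun i => ?_⟩
    have : L z i + v i = 0 := by
      have := congrFun hdv i; simpa using this
    have hvi : 0 ≤ v i := hv i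
    rw [← hLapp z i]
    linarith
  obtain ⟨f, u, hu0, huS⟩ := geometric_hahn_banach_point_closed hScv hScl h0
  have hu0' : (0:ℝ) < u := by simpa using hu0
  set y : Fin m → ℝ := fun i => f (fun j => if i = j then (1:ℝ) else 0) with hy
  have hf : ∀ w : Fin m → ℝ, f w = ∑ i, w i * y i := by
    intro w
    conv_lhs => rw [pi_eq_sum_univ w, map_sum]
    refine Finset.sum_congr rfl fun i _ => ?_
    rw [map_smul, smul_eq_mul, hy]
  -- a base point of D
  set z0 : Fin n → ℝ := Pi.single ⟨0, hn⟩ 1 with hz0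
  have hz0mem : z0 ∈ stdSimplex ℝ (Fin n) := single_mem_stdSimplex ℝ _
  have hd0 : L z0 ∈ D := ⟨z0, hz0mem, rfl⟩
  have hDsub : ∀ d ∈ D, u < f d := by
    intro d hd
    have : d = d + 0 := by simp
    rw [this]
    exact huS _ ⟨d, hd, 0, fun i => le_rfl, rfl⟩
  have hynn : ∀ i, 0 ≤ y i := by
    intro i
    by_contra hneg
    push_neg at hneg
    set t : ℝ := (f (L z0) - u + 1) / (-(y i)) with ht
    have htpos : 0 ≤ t := by
      apply div_nonneg
      · have := hDsub _ hd0; linarith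
      · linarith
    have hmem : L z0 + t • (fun j => if i = j then (1:ℝ) else 0) ∈ D + C := by
      refine ⟨L z0, hd0, t • (fun j => if i = j then (1:ℝ) else 0), fun k => ?_, rfl⟩
      simp only [Pi.smul_apply, smul_eq_mul]
      by_cases hk : i = k <;> simp [hk, htpos]
    have := huS _ hmem
    rw [map_add, map_smul, smul_eq_mul] at this
    have hyi' : f (fun j => if i = j then (1:ℝ) else 0) = y i := rfl
    rw [hyi', ht] at this
    have hyne : -(y i) ≠ 0 := by linarith
    have : u < f (L z0) + (f (L z0) - u + 1) / (-(y i)) * y i := this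
    rw [div_mul_eq_mul_div, mul_comm] at this
    have hh : y i * (f (L z0) - u + 1) / -(y i) = -(f (L z0) - u + 1) := by
      rw [div_neg, mul_div_cancel_left₀ _ (ne_of_lt hneg)]
    rw [hh] at this
    linarith
  have hfd0 : u < f (L z0) := hDsub _ hd0
  have hsum : 0 < ∑ i, y i := by
    rcases lt_or_ge 0 (∑ i, y i) with h' | h'
    · exact h'
    · exfalso
      have hall : ∀ i ∈ Finset.univ, y i = 0 := by
        have := (Finset.sum_eq_zero_iff_of_nonneg (fun i _ => hynn i)).mp
          (le_antisymm h' (Finset.sum_nonneg fun i _ => hynn i))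
        exact this
      have : f (L z0) = 0 := by
        rw [hf]
        exact Finset.sum_eq_zero fun i _ => by rw [hall i (Finset.mem_univ i), mul_zero]
      linarith
  refine ⟨fun i => y i / (∑ k, y k), ⟨fun i => div_nonneg (hynn i) hsum.le, ?_⟩, fun j => ?_⟩
  · rw [← Finset.sum_div, div_self hsum.ne']
  · -- column j : use vertex e_j of Δ_n
    have hdj : L (fun k => if j = k then (1:ℝ) else 0) ∈ D :=
      ⟨_, ite_eq_mem_stdSimplex ℝ j, rfl⟩
    have hfj : u < f (L (fun k => if j = k then (1:ℝ) else 0)) := hDsub _ hdj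
    have hval : f (L (fun k => if j = k then (1:ℝ) else 0)) = ∑ i, B i j * y i := by
      rw [hf]
      refine Finset.sum_congr rfl fun i _ => ?_
      rw [hLapp]
      rw [sum_indicator_right (fun k => B i k) j]
    have hpos : 0 < ∑ i, B i j * y i := by rw [← hval]; linarith
    have : ∑ i, y i / (∑ k, y k) * B i j = (∑ i, B i j * y i) / (∑ k, y k) := by
      rw [Finset.sum_div]
      refine Finset.sum_congr rfl fun i _ => by ring
    rw [this]
    exact div_pos hpos hsum

end Aux

/-- **Existence of optimal mixed strategies.** For every `m × n` real matrix
`B` there is `y* ∈ Δ_m` with `∑ i, y*_i B_{ij} ≥ val(B)` against every pure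
column `j`, and there is `z* ∈ Δ_n` with `∑ j, B_{ij} z*_j ≤ val(B)` against
every pure row `i`. -/
theorem matrix_game_exists_optimal_strategies (m n : ℕ) (hm : 0 < m) (hn : 0 < n)
    (B : Matrix (Fin m) (Fin n) ℝ) :
    (∃ ystar ∈ stdSimplex ℝ (Fin m),
      ∀ j : Fin n, matrixGameValue B ≤ ∑ i, ystar i * B i j) ∧
    (∃ zstar ∈ stdSimplex ℝ (Fin n),
      ∀ i : Fin m, ∑ j, B i j * zstar j ≤ matrixGameValue B) := by
  classical
  have hneN : (Finset.univ : Finset (Fin n)).Nonempty := ⟨⟨0, hn⟩, Finset.mem_univ _⟩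
  have hneM : (Finset.univ : Finset (Fin m)).Nonempty := ⟨⟨0, hm⟩, Finset.mem_univ _⟩
  haveI : Nonempty (stdSimplex ℝ (Fin n)) :=
    ⟨⟨Pi.single ⟨0, hn⟩ 1, single_mem_stdSimplex ℝ _⟩⟩
  haveI : Nonempty (stdSimplex ℝ (Fin m)) :=
    ⟨⟨Pi.single ⟨0, hm⟩ 1, single_mem_stdSimplex ℝ _⟩⟩
  set G : (Fin m → ℝ) → ℝ := fun y => Finset.univ.inf' hneN (fun j => ∑ i, y i * B i j) with hG
  set H : (Fin n → ℝ) → ℝ := fun z => Finset.univ.sup' hneM (fun i => ∑ j, B i j * z j) with hH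
  -- the inner infimum equals G
  have hinf : ∀ y : stdSimplex ℝ (Fin m),
      ⨅ z : stdSimplex ℝ (Fin n), expectedPayoff B y z = G y := by
    intro y
    have hlow : ∀ z : stdSimplex ℝ (Fin n), G (y : Fin m → ℝ) ≤ expectedPayoff B y z := by
      intro z
      rw [expectedPayoff_eq]
      exact min_le_weighted_sum _ hneN z.2
    obtain ⟨j0, _, hj0⟩ := Finset.exists_mem_eq_inf' hneN (fun j => ∑ i, (y:Fin m → ℝ) i * B i j)
    refine le_antisymm ?_ (le_ciInf hlow)
    have hbdd : BddBelow (Set.range fun z : stdSimplex ℝ (Fin n) => expectedPayoff B y z) :=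
      ⟨G (y : Fin m → ℝ), by rintro _ ⟨z, rfl⟩; exact hlow z⟩
    refine ciInf_le_of_le hbdd ⟨(fun k => if j0 = k then (1:ℝ) else 0),
      ite_eq_mem_stdSimplex ℝ j0⟩ ?_
    rw [expectedPayoff_eq]
    show ∑ j, (∑ i, (y:Fin m → ℝ) i * B i j) * (if j0 = j then (1:ℝ) else 0) ≤ _
    rw [sum_indicator_right (fun j => ∑ i, (y:Fin m → ℝ) i * B i j) j0]
    exact le_of_eq hj0.symm
  -- G is continuous, attains a maximum on the simplex
  have hGcont : Continuous G := by
    refine Continuous.finset_inf'_apply hneN fun j _ => ?_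
    exact continuous_finset_sum _ fun i _ => (continuous_apply i).mul continuous_const
  obtain ⟨ystar, hymem, hymax⟩ := (isCompact_stdSimplex ℝ (Fin m)).exists_isMaxOn
    ⟨Pi.single ⟨0, hm⟩ 1, single_mem_stdSimplex ℝ _⟩ hGcont.continuousOn
  have hymax' : ∀ y ∈ stdSimplex ℝ (Fin m), G y ≤ G ystar := hymax
  -- the value equals G ystar
  have hval : matrixGameValue B = G ystar := by
    unfold matrixGameValue
    refine le_antisymm (ciSup_le fun y => ?_) ?_
    · exact (hinf y).trans_le (hymax' _ y.2)
    · have hbdd : BddAbove (Set.range fun y : stdSimplex ℝ (Fin m) =>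
          ⨅ z : stdSimplex ℝ (Fin n), expectedPayoff B y z) := by
        refine ⟨G ystar, ?_⟩
        rintro _ ⟨y, rfl⟩
        exact (hinf y).trans_le (hymax' _ y.2)
      refine le_trans ?_ (le_ciSup hbdd (⟨ystar, hymem⟩ : stdSimplex ℝ (Fin m)))
      exact le_of_eq (hinf ⟨ystar, hymem⟩).symm
  -- H is continuous, attains a minimum on the simplex
  have hHcont : Continuous H := by
    refine Continuous.finset_sup'_apply hneM fun i _ => ?_
    exact continuous_finset_sum _ fun j _ => continuous_const.mul (continuous_apply j)
  obtain ⟨zstar, hzmem, hzmin⟩ := (isCompact_stdSimplex ℝ (Fin n)).exists_isMinOn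
    ⟨Pi.single ⟨0, hn⟩ 1, single_mem_stdSimplex ℝ _⟩ hHcont.continuousOn
  have hzmin' : ∀ z ∈ stdSimplex ℝ (Fin n), H zstar ≤ H z := hzmin
  -- minimax inequality : H zstar ≤ G ystar
  have hkey : H zstar ≤ G ystar := by
    by_contra hlt
    push_neg at hlt
    set c : ℝ := (G ystar + H zstar) / 2 with hc
    have hc1 : G ystar < c := by rw [hc]; linarith
    have hc2 : c < H zstar := by rw [hc]; linarith
    have hfar := farkas_alternative hm hn (Matrix.of fun i j => B i j - c) ?_
    · obtain ⟨y, hymem2, hypos⟩ := hfar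
      have hGy : c < G y := by
        rw [hG]
        rw [Finset.lt_inf'_iff]
        intro j _
        have := hypos j
        have hij : ∑ i, y i * (B i j - c) = (∑ i, y i * B i j) - c := by
          simp_rw [mul_sub]
          rw [Finset.sum_sub_distrib, ← Finset.sum_mul, hymem2.2, one_mul]
        simp only [Matrix.of_apply] at this
        rw [hij] at this
        linarith
      have := hymax' y hymem2
      linarith
    · rintro ⟨z, hzmem2, hzle⟩
      have hHz : H z ≤ c := by
        rw [hH]
        refine Finset.sup'_le hneM _ fun i _ => ?_
        have := hzle i
        simp only [Matrix.of_apply] at this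
        have hij : ∑ j, (B i j - c) * z j = (∑ j, B i j * z j) - c := by
          simp_rw [sub_mul]
          rw [Finset.sum_sub_distrib, ← Finset.mul_sum, hzmem2.2, mul_one]
        rw [hij] at this
        linarith
      have := hzmin' z hzmem2
      linarith
  constructor
  · refine ⟨ystar, hymem, fun j => ?_⟩
    rw [hval]
    exact Finset.inf'_le _ (Finset.mem_univ j)
  · refine ⟨zstar, hzmem, fun i => ?_⟩
    have h1 : ∑ j, B i j * zstar j ≤ H zstar := by
      show (∑ j, B i j * zstar j) ≤ Finset.univ.sup' hneM fun i => ∑ j, B i j * zstar j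
      exact Finset.le_sup' (fun i => ∑ j, B i j * zstar j) (Finset.mem_univ i)
    rw [hval]
    linarith
end

section
/- (Existence and uniqueness of the value vector of a stopping zero-sum stochastic game.) Let the game have p game elements, stage payoff matrices a^k of size m_k × n_k, and transition probabilities q^{kl}_{ij} ≥ 0 satisfying Σ_{l=1}^p q^{kl}_{ij} ≤ β for all k, i, j, where 0 ≤ β < 1. Then there exists exactly one vector v = (v_1,…,v_p) ∈ ℝ^p satisfying v_k = val(B_k(v)) for every k = 1,…,p, where B_k(v) is the m_k × n_k matrix with entries b^k_{ij} = a^k_{ij} + Σ_{l=1}^p q^{kl}_{ij} v_l. -/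
open scoped BigOperators

/-- The auxiliary matrix `B_k(v)` of a stochastic game, with entries
`b^k_{ij} = a^k_{ij} + ∑_l q^{kl}_{ij} v_l`. -/
noncomputable def gameElementMatrix {p : ℕ} {m n : Fin p → ℕ}
    (a : ∀ k, Matrix (Fin (m k)) (Fin (n k)) ℝ)
    (q : ∀ k, Fin (m k) → Fin (n k) → Fin p → ℝ)
    (v : Fin p → ℝ) (k : Fin p) : Matrix (Fin (m k)) (Fin (n k)) ℝ :=
  fun i j => a k i j + ∑ l, q k i j l * v l

namespace StochGameAux

/-- crude bound on matrix entries -/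
noncomputable def Mbound {m n : ℕ} (B : Matrix (Fin m) (Fin n) ℝ) : ℝ :=
  ∑ i, ∑ j, |B i j|

lemma simplex_nonneg {n : ℕ} {y : Fin n → ℝ} (hy : y ∈ stdSimplex ℝ (Fin n)) (i : Fin n) :
    0 ≤ y i := hy.1 i

lemma simplex_sum {n : ℕ} {y : Fin n → ℝ} (hy : y ∈ stdSimplex ℝ (Fin n)) :
    ∑ i, y i = 1 := hy.2

lemma simplex_le_one {n : ℕ} {y : Fin n → ℝ} (hy : y ∈ stdSimplex ℝ (Fin n)) (i : Fin n) :
    y i ≤ 1 := by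
  rw [← hy.2]
  exact Finset.single_le_sum (fun j _ => hy.1 j) (Finset.mem_univ i)

lemma abs_expectedPayoff_le {m n : ℕ} (B : Matrix (Fin m) (Fin n) ℝ)
    {y : Fin m → ℝ} {z : Fin n → ℝ}
    (hy : y ∈ stdSimplex ℝ (Fin m)) (hz : z ∈ stdSimplex ℝ (Fin n)) :
    |expectedPayoff B y z| ≤ Mbound B := by
  unfold expectedPayoff Mbound
  calc |∑ i, ∑ j, y i * B i j * z j| ≤ ∑ i, ∑ j, |y i * B i j * z j| := by
        refine (Finset.abs_sum_le_sum_abs _ _).trans ?_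
        exact Finset.sum_le_sum fun i _ => Finset.abs_sum_le_sum_abs _ _
    _ ≤ ∑ i, ∑ j, |B i j| := by
        refine Finset.sum_le_sum fun i _ => Finset.sum_le_sum fun j _ => ?_
        rw [abs_mul, abs_mul, abs_of_nonneg (hy.1 i), abs_of_nonneg (hz.1 j)]
        calc y i * |B i j| * z j ≤ 1 * |B i j| * 1 := by
              apply mul_le_mul (mul_le_mul (simplex_le_one hy i) le_rfl (abs_nonneg _)
                (by norm_num)) (simplex_le_one hz j) (hz.1 j)
              positivity
          _ = |B i j| := by ring

lemma expectedPayoff_le_add {m n : ℕ} (B B' : Matrix (Fin m) (Fin n) ℝ) (C : ℝ)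
    {y : Fin m → ℝ} {z : Fin n → ℝ}
    (hy : y ∈ stdSimplex ℝ (Fin m)) (hz : z ∈ stdSimplex ℝ (Fin n))
    (h : ∀ i j, B i j ≤ B' i j + C) :
    expectedPayoff B y z ≤ expectedPayoff B' y z + C := by
  unfold expectedPayoff
  have key : ∑ i, ∑ j, y i * B i j * z j ≤ ∑ i, ∑ j, (y i * B' i j * z j + y i * C * z j) := by
    refine Finset.sum_le_sum fun i _ => Finset.sum_le_sum fun j _ => ?_
    have : y i * B i j * z j ≤ y i * (B' i j + C) * z j := by
      apply mul_le_mul_of_nonneg_right _ (hz.1 j)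
      exact mul_le_mul_of_nonneg_left (h i j) (hy.1 i)
    linarith [this]
  refine key.trans ?_
  have : ∑ i, ∑ j, (y i * B' i j * z j + y i * C * z j)
      = (∑ i, ∑ j, y i * B' i j * z j) + ∑ i, ∑ j, y i * C * z j := by
    simp [Finset.sum_add_distrib]
  rw [this]
  have hC : ∑ i, ∑ j, y i * C * z j = C := by
    have : ∀ i, ∑ j, y i * C * z j = y i * C := by
      intro i
      rw [← Finset.mul_sum, simplex_sum hz, mul_one]
    simp only [this, ← Finset.sum_mul, simplex_sum hy, one_mul]
  linarith [hC.le, hC.ge]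

variable {m n : ℕ}

noncomputable def innerInf (B : Matrix (Fin m) (Fin n) ℝ) (y : stdSimplex ℝ (Fin m)) : ℝ :=
  ⨅ z : stdSimplex ℝ (Fin n), expectedPayoff B y z

lemma nonempty_simplex (k : ℕ) (hk : 0 < k) : Nonempty (stdSimplex ℝ (Fin k)) :=
  ⟨⟨_, ite_eq_mem_stdSimplex ℝ ⟨0, hk⟩⟩⟩

lemma bddBelow_payoff (B : Matrix (Fin m) (Fin n) ℝ) (y : stdSimplex ℝ (Fin m)) :
    BddBelow (Set.range fun z : stdSimplex ℝ (Fin n) => expectedPayoff B y z) := by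
  refine ⟨-Mbound B, ?_⟩
  rintro x ⟨z, rfl⟩
  have : |expectedPayoff B y z| ≤ Mbound B := abs_expectedPayoff_le B y.2 z.2
  linarith [abs_le.mp this]

lemma innerInf_le_M (B : Matrix (Fin m) (Fin n) ℝ) (hn : 0 < n) (y : stdSimplex ℝ (Fin m)) :
    innerInf B y ≤ Mbound B := by
  obtain ⟨z⟩ := nonempty_simplex n hn
  refine (ciInf_le (bddBelow_payoff B y) z).trans ?_
  have : |expectedPayoff B y z| ≤ Mbound B := abs_expectedPayoff_le B y.2 z.2
  linarith [abs_le.mp this]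

lemma bddAbove_innerInf (B : Matrix (Fin m) (Fin n) ℝ) (hn : 0 < n) :
    BddAbove (Set.range fun y : stdSimplex ℝ (Fin m) => innerInf B y) := by
  refine ⟨Mbound B, ?_⟩
  rintro x ⟨y, rfl⟩
  exact innerInf_le_M B hn y

lemma value_le_add (B B' : Matrix (Fin m) (Fin n) ℝ) (C : ℝ)
    (hm : 0 < m) (hn : 0 < n)
    (h : ∀ i j, B i j ≤ B' i j + C) :
    matrixGameValue B ≤ matrixGameValue B' + C := by
  have hne : Nonempty (stdSimplex ℝ (Fin m)) := nonempty_simplex m hm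
  have hne' : Nonempty (stdSimplex ℝ (Fin n)) := nonempty_simplex n hn
  unfold matrixGameValue
  refine ciSup_le fun y => ?_
  have h1 : innerInf B y ≤ innerInf B' y + C := by
    rw [← sub_le_iff_le_add]
    refine le_ciInf fun z => ?_
    rw [sub_le_iff_le_add]
    calc innerInf B y ≤ expectedPayoff B y z := ciInf_le (bddBelow_payoff B y) z
      _ ≤ expectedPayoff B' y z + C := expectedPayoff_le_add B B' C y.2 z.2 h
  refine h1.trans ?_
  have h2 : innerInf B' y ≤ ⨆ y' : stdSimplex ℝ (Fin m), innerInf B' y' :=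
    le_ciSup (bddAbove_innerInf B' hn) y
  exact add_le_add_left h2 C

lemma abs_value_sub_le (B B' : Matrix (Fin m) (Fin n) ℝ) (C : ℝ)
    (hm : 0 < m) (hn : 0 < n)
    (h : ∀ i j, |B i j - B' i j| ≤ C) :
    |matrixGameValue B - matrixGameValue B'| ≤ C := by
  have h1 := value_le_add B B' C hm hn fun i j => by linarith [(abs_le.mp (h i j)).2]
  have h2 := value_le_add B' B C hm hn fun i j => by linarith [(abs_le.mp (h i j)).1]
  rw [abs_le]; constructor <;> linarith

end StochGameAux

/-- **Existence and uniqueness of the value vector of a stopping zero-sum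
stochastic game:** there is exactly one `v ∈ ℝ^p` with `v_k = val(B_k(v))`
for every game element `k`. -/
theorem stochastic_game_value_vector_exists_unique
    (p : ℕ) (hp : 0 < p) (m n : Fin p → ℕ)
    (hm : ∀ k, 0 < m k) (hn : ∀ k, 0 < n k)
    (a : ∀ k, Matrix (Fin (m k)) (Fin (n k)) ℝ)
    (q : ∀ k, Fin (m k) → Fin (n k) → Fin p → ℝ)
    (hq : ∀ k i j l, 0 ≤ q k i j l)
    (β : ℝ) (hβ0 : 0 ≤ β) (hβ1 : β < 1)
    (hqβ : ∀ k i j, ∑ l, q k i j l ≤ β) :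
    ∃! v : Fin p → ℝ, ∀ k, v k = matrixGameValue (gameElementMatrix a q v k) := by
  set T : (Fin p → ℝ) → (Fin p → ℝ) :=
    fun v k => matrixGameValue (gameElementMatrix a q v k) with hT
  have hdist : ∀ v w : Fin p → ℝ, dist (T v) (T w) ≤ β * dist v w := by
    intro v w
    rw [dist_pi_le_iff (by positivity)]
    intro k
    rw [Real.dist_eq]
    refine StochGameAux.abs_value_sub_le _ _ _ (hm k) (hn k) fun i j => ?_
    unfold gameElementMatrix
    have : a k i j + ∑ l, q k i j l * v l - (a k i j + ∑ l, q k i j l * w l)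
        = ∑ l, q k i j l * (v l - w l) := by
      simp only [mul_sub]
      rw [Finset.sum_sub_distrib]
      ring
    rw [this]
    calc |∑ l, q k i j l * (v l - w l)| ≤ ∑ l, |q k i j l * (v l - w l)| :=
          Finset.abs_sum_le_sum_abs _ _
      _ ≤ ∑ l, q k i j l * dist v w := by
          refine Finset.sum_le_sum fun l _ => ?_
          rw [abs_mul, abs_of_nonneg (hq k i j l)]
          refine mul_le_mul_of_nonneg_left ?_ (hq k i j l)
          rw [← Real.dist_eq]
          exact dist_le_pi_dist v w l
      _ = (∑ l, q k i j l) * dist v w := (Finset.sum_mul _ _ _).symm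
      _ ≤ β * dist v w := mul_le_mul_of_nonneg_right (hqβ k i j) dist_nonneg
  have hc : ContractingWith ⟨β, hβ0⟩ T := by
    constructor
    · exact_mod_cast hβ1
    · exact LipschitzWith.of_dist_le_mul hdist
  have hfix := hc.fixedPoint_isFixedPt
  refine ⟨hc.fixedPoint T, ?_, ?_⟩
  · intro k
    have : T (hc.fixedPoint T) = hc.fixedPoint T := hfix
    conv_lhs => rw [← this]
  · intro v hv
    refine hc.fixedPoint_unique ?_
    funext k
    exact (hv k).symm
end

section
/- (Geometric error bound for value iteration.) Let the game have p game elements, stage payoff matrices a^k, and transition probabilities q^{kl}_{ij} ≥ 0 with Σ_{l=1}^p q^{kl}_{ij} ≤ β for all k, i, j, where 0 ≤ β < 1; let v ∈ ℝ^p be the unique vector with v_k = val(B_k(v)) for all k, and let v^0 = 0, v^{r+1}_k = val(B_k(v^r)) be the value iteration. Then for every r ≥ 0, max_k |v^r_k − v_k| ≤ (β^r / (1 − β)) · max_k |v^1_k|, so the iterates converge geometrically to the value vector. -/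
open scoped BigOperators

lemma simplex_nonempty {m : ℕ} (hm : 0 < m) : Nonempty (stdSimplex ℝ (Fin m)) := by
  haveI : NeZero m := ⟨hm.ne'⟩
  refine ⟨⟨fun _ => (m : ℝ)⁻¹, fun i => by positivity, ?_⟩⟩
  rw [Finset.sum_const, Finset.card_univ, Fintype.card_fin, nsmul_eq_mul]
  field_simp

lemma expectedPayoff_le_add {m n : ℕ} (B C : Matrix (Fin m) (Fin n) ℝ) (c : ℝ)
    (h : ∀ i j, |B i j - C i j| ≤ c)
    (y : stdSimplex ℝ (Fin m)) (z : stdSimplex ℝ (Fin n)) :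
    expectedPayoff B y z ≤ expectedPayoff C y z + c := by
  have hy := y.2
  have hz := z.2
  have key : expectedPayoff B y z - expectedPayoff C y z ≤ c := by
    have heq : expectedPayoff B y z - expectedPayoff C y z
        = ∑ i, ∑ j, (y : Fin m → ℝ) i * (B i j - C i j) * (z : Fin n → ℝ) j := by
      unfold expectedPayoff
      rw [← Finset.sum_sub_distrib]
      refine Finset.sum_congr rfl fun i _ => ?_
      rw [← Finset.sum_sub_distrib]
      refine Finset.sum_congr rfl fun j _ => by ring
    rw [heq]
    calc ∑ i, ∑ j, (y : Fin m → ℝ) i * (B i j - C i j) * (z : Fin n → ℝ) j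
        ≤ ∑ i, ∑ j, (y : Fin m → ℝ) i * c * (z : Fin n → ℝ) j := by
          refine Finset.sum_le_sum fun i _ => Finset.sum_le_sum fun j _ => ?_
          have h1 : B i j - C i j ≤ c := (abs_le.mp (h i j)).2
          have h2 := hy.1 i; have h3 := hz.1 j
          exact mul_le_mul_of_nonneg_right (mul_le_mul_of_nonneg_left h1 h2) h3
      _ = c := by
          have hstep : ∀ i : Fin m, ∑ j, (y : Fin m → ℝ) i * c * (z : Fin n → ℝ) j
              = (y : Fin m → ℝ) i * c := by
            intro i; rw [← Finset.mul_sum, show ∑ j, (z : Fin n → ℝ) j = 1 from hz.2, mul_one]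
          rw [Finset.sum_congr rfl fun i _ => hstep i, ← Finset.sum_mul, show ∑ i, (y : Fin m → ℝ) i = 1 from hy.2, one_mul]
  linarith

lemma matrixGameValue_le_add {m n : ℕ} (hm : 0 < m) (hn : 0 < n)
    (B C : Matrix (Fin m) (Fin n) ℝ) (c : ℝ)
    (h : ∀ i j, |B i j - C i j| ≤ c) :
    matrixGameValue B ≤ matrixGameValue C + c := by
  haveI hym : Nonempty (stdSimplex ℝ (Fin m)) := simplex_nonempty hm
  haveI hzn : Nonempty (stdSimplex ℝ (Fin n)) := simplex_nonempty hn
  set M : ℝ := ∑ i, ∑ j, (|B i j| + |C i j|) with hM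
  have hDM : ∀ i j, |B i j| ≤ M ∧ |C i j| ≤ M := by
    intro i j
    have h1 : |B i j| + |C i j| ≤ ∑ j', (|B i j'| + |C i j'|) :=
      Finset.single_le_sum (f := fun j' => |B i j'| + |C i j'|)
        (fun j' _ => by positivity) (Finset.mem_univ j)
    have h2 : ∑ j', (|B i j'| + |C i j'|) ≤ M :=
      Finset.single_le_sum (f := fun i' => ∑ j', (|B i' j'| + |C i' j'|))
        (fun i' _ => by positivity) (Finset.mem_univ i)
    constructor
    · have : 0 ≤ |C i j| := abs_nonneg _
      linarith
    · have : 0 ≤ |B i j| := abs_nonneg _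
      linarith
  have hpay : ∀ (D : Matrix (Fin m) (Fin n) ℝ), (∀ i j, |D i j| ≤ M) →
      ∀ (y : stdSimplex ℝ (Fin m)) (z : stdSimplex ℝ (Fin n)),
      -M ≤ expectedPayoff D y z ∧ expectedPayoff D y z ≤ M := by
    intro D hD y z
    have h1 := expectedPayoff_le_add (0 : Matrix (Fin m) (Fin n) ℝ) D M
      (by intro i j; simpa using hD i j) y z
    have h2 := expectedPayoff_le_add D (0 : Matrix (Fin m) (Fin n) ℝ) M
      (by intro i j; simpa using hD i j) y z
    have h0 : expectedPayoff (0 : Matrix (Fin m) (Fin n) ℝ) y z = 0 := by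
      simp [expectedPayoff]
    rw [h0] at h1 h2
    constructor <;> linarith
  have hbdB : ∀ (y : stdSimplex ℝ (Fin m)),
      BddBelow (Set.range fun z : stdSimplex ℝ (Fin n) => expectedPayoff B y z) := by
    intro y
    exact ⟨-M, by rintro x ⟨z, rfl⟩; exact (hpay B (fun i j => (hDM i j).1) y z).1⟩
  have hbdC : ∀ (y : stdSimplex ℝ (Fin m)),
      BddBelow (Set.range fun z : stdSimplex ℝ (Fin n) => expectedPayoff C y z) := by
    intro y
    refine ⟨-M, ?_⟩
    rintro x ⟨z, rfl⟩
    exact (hpay C (fun i j => (hDM i j).2) y z).1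
  have hbdCsup : BddAbove (Set.range fun y : stdSimplex ℝ (Fin m) =>
      ⨅ z : stdSimplex ℝ (Fin n), expectedPayoff C y z) := by
    refine ⟨M, ?_⟩
    rintro x ⟨y, rfl⟩
    obtain ⟨z0⟩ := hzn
    exact le_trans (ciInf_le (hbdC y) z0) (hpay C (fun i j => (hDM i j).2) y z0).2
  unfold matrixGameValue
  refine ciSup_le fun y => ?_
  have step : (⨅ z : stdSimplex ℝ (Fin n), expectedPayoff B y z)
      ≤ (⨅ z : stdSimplex ℝ (Fin n), expectedPayoff C y z) + c := by
    rw [← sub_le_iff_le_add]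
    refine le_ciInf fun z => ?_
    rw [sub_le_iff_le_add]
    exact le_trans (ciInf_le (hbdB y) z) (expectedPayoff_le_add B C c h y z)
  exact le_trans step (add_le_add_left (le_ciSup hbdCsup y) c)

lemma abs_matrixGameValue_sub_le {m n : ℕ} (hm : 0 < m) (hn : 0 < n)
    (B C : Matrix (Fin m) (Fin n) ℝ) (c : ℝ)
    (h : ∀ i j, |B i j - C i j| ≤ c) :
    |matrixGameValue B - matrixGameValue C| ≤ c := by
  rw [abs_sub_le_iff]
  constructor
  · linarith [matrixGameValue_le_add hm hn B C c h]
  · linarith [matrixGameValue_le_add hm hn C B c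
      (fun i j => by rw [abs_sub_comm]; exact h i j)]

/-- **Geometric error bound for value iteration:** with `v` the unique fixed
point `v_k = val(B_k(v))` and iterates `w 0 = 0`,
`w (r+1) k = val(B_k(w r))`, one has
`max_k |w r k − v k| ≤ (β^r / (1 − β)) · max_k |w 1 k|` for every `r`. -/
theorem stochastic_game_value_iteration_geometric_bound
    (p : ℕ) (hp : 0 < p) (m n : Fin p → ℕ)
    (hm : ∀ k, 0 < m k) (hn : ∀ k, 0 < n k)
    (a : ∀ k, Matrix (Fin (m k)) (Fin (n k)) ℝ)
    (q : ∀ k, Fin (m k) → Fin (n k) → Fin p → ℝ)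
    (hq : ∀ k i j l, 0 ≤ q k i j l)
    (β : ℝ) (hβ0 : 0 ≤ β) (hβ1 : β < 1)
    (hqβ : ∀ k i j, ∑ l, q k i j l ≤ β)
    (v : Fin p → ℝ)
    (hv : ∀ k, v k = matrixGameValue (gameElementMatrix a q v k))
    (w : ℕ → Fin p → ℝ)
    (hw0 : w 0 = fun _ => 0)
    (hwsucc : ∀ r k, w (r + 1) k = matrixGameValue (gameElementMatrix a q (w r) k)) :
    ∀ r : ℕ, (⨆ k, |w r k - v k|) ≤ (β ^ r / (1 - β)) * ⨆ k, |w 1 k| := by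
  haveI : Nonempty (Fin p) := Fin.pos_iff_nonempty.mp hp
  -- contraction of the value operator
  have contract : ∀ (u u' : Fin p → ℝ) (k : Fin p),
      |matrixGameValue (gameElementMatrix a q u k) - matrixGameValue (gameElementMatrix a q u' k)|
      ≤ β * ⨆ l, |u l - u' l| := by
    intro u u' k
    set D : ℝ := ⨆ l, |u l - u' l| with hD
    have hDle : ∀ l, |u l - u' l| ≤ D := fun l =>
      le_ciSup (f := fun l => |u l - u' l|) (Finite.bddAbove_range _) l
    have hD0 : 0 ≤ D := le_trans (abs_nonneg _) (hDle (Classical.arbitrary _))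
    refine abs_matrixGameValue_sub_le (hm k) (hn k) _ _ (β * D) fun i j => ?_
    have heq : gameElementMatrix a q u k i j - gameElementMatrix a q u' k i j
        = ∑ l, q k i j l * (u l - u' l) := by
      unfold gameElementMatrix
      simp only [mul_sub]
      rw [Finset.sum_sub_distrib]
      ring
    rw [heq]
    calc |∑ l, q k i j l * (u l - u' l)| ≤ ∑ l, |q k i j l * (u l - u' l)| :=
          Finset.abs_sum_le_sum_abs _ _
      _ ≤ ∑ l, q k i j l * D := by
          refine Finset.sum_le_sum fun l _ => ?_
          rw [abs_mul, abs_of_nonneg (hq k i j l)]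
          exact mul_le_mul_of_nonneg_left (hDle l) (hq k i j l)
      _ = (∑ l, q k i j l) * D := by rw [Finset.sum_mul]
      _ ≤ β * D := mul_le_mul_of_nonneg_right (hqβ k i j) hD0
  -- abbreviations
  set V : ℝ := ⨆ k, |v k| with hV
  have hVle : ∀ k, |v k| ≤ V := fun k =>
    le_ciSup (f := fun k => |v k|) (Finite.bddAbove_range _) k
  have hV0 : 0 ≤ V := le_trans (abs_nonneg _) (hVle (Classical.arbitrary _))
  set W : ℝ := ⨆ k, |w 1 k| with hW
  have hWle : ∀ k, |w 1 k| ≤ W := fun k =>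
    le_ciSup (f := fun k => |w 1 k|) (Finite.bddAbove_range _) k
  have hW0 : 0 ≤ W := le_trans (abs_nonneg _) (hWle (Classical.arbitrary _))
  -- V ≤ W / (1 - β)
  have hVW : V ≤ W / (1 - β) := by
    have key : ∀ k, |v k| ≤ W + β * V := by
      intro k
      have hc := contract v (w 0) k
      rw [← hv k, ← hwsucc 0 k] at hc
      have hVeq : (⨆ l, |v l - w 0 l|) = V := by
        rw [hw0, hV]
        simp
      rw [hVeq] at hc
      calc |v k| = |(v k - w 1 k) + w 1 k| := by ring_nf
        _ ≤ |v k - w 1 k| + |w 1 k| := abs_add_le _ _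
        _ ≤ β * V + W := add_le_add hc (hWle k)
        _ = W + β * V := by ring
    have h2 : V ≤ W + β * V := ciSup_le key
    rw [le_div_iff₀ (by linarith)]
    nlinarith
  -- main induction: sup |w r - v| ≤ β^r * V
  have main : ∀ r, (⨆ k, |w r k - v k|) ≤ β ^ r * V := by
    intro r
    induction r with
    | zero =>
      simp only [pow_zero, one_mul, hw0, zero_sub, abs_neg]
      exact ciSup_le fun k => hVle k
    | succ r ih =>
      refine ciSup_le fun k => ?_
      have hc := contract (w r) v k
      rw [← hwsucc r k, ← hv k] at hc
      calc |w (r + 1) k - v k| ≤ β * ⨆ l, |w r l - v l| := hc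
        _ ≤ β * (β ^ r * V) := mul_le_mul_of_nonneg_left ih hβ0
        _ = β ^ (r + 1) * V := by ring
  intro r
  calc (⨆ k, |w r k - v k|) ≤ β ^ r * V := main r
    _ ≤ β ^ r * (W / (1 - β)) := mul_le_mul_of_nonneg_left hVW (by positivity)
    _ = (β ^ r / (1 - β)) * W := by ring
end
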